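/- For any prime power v ≡ 3 (mod 4), the quadratic residues in GF(v) form a (v, (v−1)/2, (v−3)/4) difference set (Paley difference set) in the additive group of GF(v). -/

import Mathlib

/-- For any prime power v ≡ 3 (mod 4), the quadratic residues of GF(v) form a
(v, (v−1)/2, (v−3)/4) difference set in the additive group of GF(v). -/
theorem paley_difference_set (v : ℕ) (F : Type*) [Field F] [Fintype F] [DecidableEq F]
    (hcard : Fintype.card F = v) (hv : v % 4 = 3) :
    (Finset.univ.filter (fun x : F => x ≠ 0 ∧ IsSquare x)).card = (v - 1) / 2 ∧
    ∀ g : F, g ≠ 0 →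
      (((Finset.univ.filter (fun x : F => x ≠ 0 ∧ IsSquare x)) ×ˢ
        (Finset.univ.filter (fun x : F => x ≠ 0 ∧ IsSquare x))).filter
          (fun p => p.1 - p.2 = g)).card = (v - 3) / 4 := by
  classical
  set D := Finset.univ.filter (fun x : F => x ≠ 0 ∧ IsSquare x) with hDdef
  have hmod : Fintype.card F % 4 = 3 := by rw [hcard]; exact hv
  have hneg1 : ¬ IsSquare (-1 : F) := by
    rw [FiniteField.isSquare_neg_one_iff]
    simp [hmod]
  -- key dichotomy: for x ≠ 0, exactly one of x, -x is a square
  have hkey : ∀ x : F, x ≠ 0 → (IsSquare x ↔ ¬ IsSquare (-x)) := by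
    intro x hx
    constructor
    · rintro ⟨a, rfl⟩ ⟨b, hb⟩
      have ha : a ≠ 0 := by rintro rfl; simp at hx
      apply hneg1
      refine ⟨b * a⁻¹, ?_⟩
      have ha2 : a * a ≠ 0 := mul_ne_zero ha ha
      have h2 : b * a⁻¹ * (b * a⁻¹) = b * b * (a * a)⁻¹ := by ring
      rw [h2, ← hb, neg_mul, mul_inv_cancel₀ ha2]
    · intro h
      by_contra hsx
      -- x nonsquare, -x nonsquare: contradiction via quadratic character
      have hchar : ringChar F ≠ 2 := by
        intro h2
        have := FiniteField.even_card_of_char_two h2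
        rw [hcard] at this
        omega
      have h1 : quadraticChar F x = -1 :=
        (quadraticChar_neg_one_iff_not_isSquare).mpr hsx
      have h2 : quadraticChar F (-x) = -1 :=
        (quadraticChar_neg_one_iff_not_isSquare).mpr h
      have h3 : quadraticChar F (-1 : F) = -1 :=
        (quadraticChar_neg_one_iff_not_isSquare).mpr hneg1
      have : quadraticChar F (-x) = quadraticChar F (-1) * quadraticChar F x := by
        rw [← map_mul]; ring_nf
      rw [h1, h2, h3] at this
      norm_num at this
  -- membership in D
  have hDmem : ∀ x : F, x ∈ D ↔ x ≠ 0 ∧ IsSquare x := by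
    intro x; simp [hDdef]
  -- cardinality of D
  have hvodd : v % 2 = 1 := by omega
  have hv3 : 3 ≤ v := by
    have : 0 < v := by rw [← hcard]; exact Fintype.card_pos
    omega
  have hDneg_disj : Disjoint D (D.image (fun x => -x)) := by
    rw [Finset.disjoint_left]
    intro a haD haI
    rw [Finset.mem_image] at haI
    obtain ⟨b, hbD, hba⟩ := haI
    rw [hDmem] at haD hbD
    have := (hkey a haD.1).mp haD.2
    apply this
    rw [← hba]; simpa using hbD.2
  have hDneg_union : D ∪ D.image (fun x => -x) = Finset.univ.erase (0 : F) := by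
    ext x
    simp only [Finset.mem_union, Finset.mem_image, Finset.mem_erase, Finset.mem_univ,
      and_true, hDmem]
    constructor
    · rintro (⟨hx, _⟩ | ⟨b, ⟨hb, _⟩, hbx⟩)
      · exact hx
      · rw [← hbx]; simpa using hb
    · intro hx
      by_cases hs : IsSquare x
      · exact Or.inl ⟨hx, hs⟩
      · refine Or.inr ⟨-x, ⟨by simpa using hx, ?_⟩, by simp⟩
        by_contra hns
        exact hns (not_not.mp (fun hnn => hns ((hkey (-x) (by simpa using hx)).mpr
          (by simpa using hs))))
  have hcardDneg : (D.image (fun x => -x)).card = D.card :=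
    Finset.card_image_of_injective _ neg_injective
  have hcarderase : (Finset.univ.erase (0 : F)).card = v - 1 := by
    rw [Finset.card_erase_of_mem (Finset.mem_univ 0), Finset.card_univ, hcard]
  have hcardD2 : 2 * D.card = v - 1 := by
    have := Finset.card_union_of_disjoint hDneg_disj
    rw [hDneg_union, hcarderase, hcardDneg] at this
    omega
  have hcardD : D.card = (v - 1) / 2 := by omega
  refine ⟨hcardD, ?_⟩
  -- the difference count function
  set N : F → ℕ := fun g => ((D ×ˢ D).filter (fun p => p.1 - p.2 = g)).card with hNdef
  -- scaling invariance
  have hscale : ∀ s g : F, s ≠ 0 → IsSquare s → N (s * g) = N g := by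
    intro s g hs hsq
    have hsinv : IsSquare s⁻¹ := by
      obtain ⟨r, hr⟩ := hsq
      exact ⟨r⁻¹, by rw [hr]; rw [mul_inv]⟩
    refine (Finset.card_nbij' (fun p => (s * p.1, s * p.2)) (fun p => (s⁻¹ * p.1, s⁻¹ * p.2))
      ?_ ?_ ?_ ?_).symm
    · intro p hp
      simp only [Finset.mem_coe, Finset.mem_filter, Finset.mem_product, hDmem] at hp ⊢
      obtain ⟨⟨⟨h1, h1s⟩, ⟨h2, h2s⟩⟩, hdiff⟩ := hp
      refine ⟨⟨⟨by simp [hs, h1], hsq.mul h1s⟩, ⟨by simp [hs, h2], hsq.mul h2s⟩⟩, ?_⟩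
      rw [← mul_sub, hdiff]
    · intro p hp
      simp only [Finset.mem_coe, Finset.mem_filter, Finset.mem_product, hDmem] at hp ⊢
      obtain ⟨⟨⟨h1, h1s⟩, ⟨h2, h2s⟩⟩, hdiff⟩ := hp
      refine ⟨⟨⟨by simp [hs, h1], hsinv.mul h1s⟩, ⟨by simp [hs, h2], hsinv.mul h2s⟩⟩, ?_⟩
      rw [← mul_sub, hdiff, ← mul_assoc, inv_mul_cancel₀ hs, one_mul]
    · intro p _
      simp [← mul_assoc, mul_inv_cancel₀ hs, inv_mul_cancel₀ hs]
    · intro p _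
      simp [← mul_assoc, mul_inv_cancel₀ hs, inv_mul_cancel₀ hs]
  -- negation invariance
  have hneg : ∀ g : F, N (-g) = N g := by
    intro g
    refine Finset.card_nbij' (fun p => (p.2, p.1)) (fun p => (p.2, p.1)) ?_ ?_ ?_ ?_
    · intro p hp
      simp only [Finset.mem_coe, Finset.mem_filter, Finset.mem_product] at hp ⊢
      refine ⟨⟨hp.1.2, hp.1.1⟩, ?_⟩
      have := hp.2
      linear_combination -this
    · intro p hp
      simp only [Finset.mem_coe, Finset.mem_filter, Finset.mem_product] at hp ⊢
      refine ⟨⟨hp.1.2, hp.1.1⟩, ?_⟩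
      have := hp.2
      linear_combination -this
    · intro p _; rfl
    · intro p _; rfl
  -- N is constant on nonzero elements
  have hconst : ∀ g : F, g ≠ 0 → N g = N 1 := by
    intro g hg
    by_cases hs : IsSquare g
    · have := hscale g 1 hg hs
      rw [mul_one] at this
      exact this
    · have hnegsq : IsSquare (-g) := by
        by_contra h
        exact hs ((hkey g hg).mpr h)
      have h1 : N (-g) = N 1 := by
        have := hscale (-g) 1 (by simpa using hg) hnegsq
        rw [mul_one] at this
        exact this
      rw [← hneg g]
      exact h1
  -- sum of N over all g equals |D|^2
  have hsum : ∑ g : F, N g = D.card * D.card := by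
    rw [← Finset.card_product]
    exact (Finset.card_eq_sum_card_fiberwise (f := fun p : F × F => p.1 - p.2)
      (fun x _ => Finset.mem_univ _)).symm
  -- N 0 = |D|
  have hN0 : N 0 = D.card := by
    refine Finset.card_nbij' (fun p => p.1) (fun a => (a, a)) ?_ ?_ ?_ ?_
    · intro p hp
      simp only [Finset.mem_coe, Finset.mem_filter, Finset.mem_product] at hp
      exact hp.1.1
    · intro a ha
      simp only [Finset.mem_coe, Finset.mem_filter, Finset.mem_product]
      exact ⟨⟨ha, ha⟩, by simp⟩
    · intro p hp
      simp only [Finset.mem_coe, Finset.mem_filter, Finset.mem_product] at hp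
      have : p.1 = p.2 := by
        have := hp.2
        linear_combination this
      exact Prod.ext rfl this
    · intro a _; rfl
  -- split the sum
  have hsplit : ∑ g : F, N g = N 0 + ∑ g ∈ Finset.univ.erase (0 : F), N g :=
    (Finset.add_sum_erase _ _ (Finset.mem_univ 0)).symm
  have hrest : ∑ g ∈ Finset.univ.erase (0 : F), N g = (v - 1) * N 1 := by
    rw [Finset.sum_congr rfl (fun g hg => hconst g (Finset.ne_of_mem_erase hg)),
      Finset.sum_const, hcarderase, smul_eq_mul]
  have hmain : D.card + (v - 1) * N 1 = D.card * D.card := by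
    rw [hsplit, hN0, hrest] at hsum
    exact hsum
  -- arithmetic
  obtain ⟨m, hm⟩ : ∃ m, v = 4 * m + 3 := ⟨v / 4, by omega⟩
  have hk : D.card = 2 * m + 1 := by omega
  have heq : (4 * m + 2) * N 1 = (4 * m + 2) * m := by
    rw [hk] at hmain
    have hv1 : v - 1 = 4 * m + 2 := by omega
    rw [hv1] at hmain
    nlinarith [hmain]
  have hN1 : N 1 = m := Nat.eq_of_mul_eq_mul_left (by omega) heq
  intro g hg
  have hfin : N g = (v - 3) / 4 := by
    rw [hconst g hg, hN1]
    omega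
  exact hfin
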